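/- arXiv:2403.19437 — 3 statements merged into one kernel-verified Lean document; each statement's English description precedes it below -/
import Mathlib

section
/- Let (Ω, 𝒜, μ) be an atom-free σ-finite measure space and K ∈ (0, μ(Ω)). Then |·|_K is a norm on L^1(Ω); in particular |u|_K > 0 whenever u ≠ 0 in L^1(Ω). -/
open MeasureTheory Set
open scoped ENNReal

/-- The largest-K-norm: `|u|_K = sup { ∫_A |u| dμ : A measurable, μ(A) ≤ K }`. -/
noncomputable def largestK {Ω : Type*} [MeasurableSpace Ω] (μ : Measure Ω) (K : ℝ≥0∞)
    (u : Ω → ℝ) : ℝ :=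
  sSup {r : ℝ | ∃ A : Set Ω, MeasurableSet A ∧ μ A ≤ K ∧ r = ∫ x in A, |u x| ∂μ}

/-- A measure is atom-free if no measurable set `A` with `μ A > 0` is an atom. -/
def AtomFree {Ω : Type*} [MeasurableSpace Ω] (μ : Measure Ω) : Prop :=
  ∀ A : Set Ω, MeasurableSet A → 0 < μ A →
    ∃ B : Set Ω, MeasurableSet B ∧ B ⊆ A ∧ 0 < μ B ∧ 0 < μ (A \ B)

lemma largestK_set_nonempty {Ω : Type*} [MeasurableSpace Ω] (μ : Measure Ω) (K : ℝ≥0∞)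
    (u : Ω → ℝ) :
    (0:ℝ) ∈ {r : ℝ | ∃ A : Set Ω, MeasurableSet A ∧ μ A ≤ K ∧ r = ∫ x in A, |u x| ∂μ} :=
  ⟨∅, MeasurableSet.empty, by simp, by simp⟩

lemma largestK_bddAbove {Ω : Type*} [MeasurableSpace Ω] {μ : Measure Ω} (K : ℝ≥0∞)
    {u : Ω → ℝ} (hu : Integrable u μ) :
    BddAbove {r : ℝ | ∃ A : Set Ω, MeasurableSet A ∧ μ A ≤ K ∧ r = ∫ x in A, |u x| ∂μ} := by
  refine ⟨∫ x, |u x| ∂μ, ?_⟩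
  rintro r ⟨A, hA, hAK, rfl⟩
  exact setIntegral_le_integral hu.abs (Filter.Eventually.of_forall fun x => abs_nonneg _)

lemma le_largestK {Ω : Type*} [MeasurableSpace Ω] {μ : Measure Ω} {K : ℝ≥0∞}
    {u : Ω → ℝ} (hu : Integrable u μ) {A : Set Ω} (hA : MeasurableSet A) (hAK : μ A ≤ K) :
    ∫ x in A, |u x| ∂μ ≤ largestK μ K u :=
  le_csSup (largestK_bddAbove K hu) ⟨A, hA, hAK, rfl⟩

/-- halving lemma -/
lemma shrink {Ω : Type*} [MeasurableSpace Ω] {μ : Measure Ω} (hμ : AtomFree μ) :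
    ∀ (n : ℕ) (A : Set Ω), MeasurableSet A → 0 < μ A →
      ∃ B : Set Ω, MeasurableSet B ∧ B ⊆ A ∧ 0 < μ B ∧ μ B ≤ μ A * 2⁻¹ ^ n := by
  intro n
  induction n with
  | zero => exact fun A hA hpos => ⟨A, hA, subset_rfl, hpos, by simp⟩
  | succ n ih =>
    intro A hA hpos
    obtain ⟨B, hB, hBA, hBpos, hBle⟩ := ih A hA hpos
    obtain ⟨C, hC, hCB, hCpos, hdpos⟩ := hμ B hB hBpos
    have hsum : μ C + μ (B \ C) = μ B := by
      have := measure_inter_add_diff (μ := μ) B hC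
      rwa [Set.inter_eq_self_of_subset_right hCB] at this
    have hhalf : μ C ≤ μ B / 2 ∨ μ (B \ C) ≤ μ B / 2 := by
      by_contra h
      push_neg at h
      have h1 : μ B / 2 + μ B / 2 < μ C + μ (B \ C) := ENNReal.add_lt_add h.1 h.2
      rw [ENNReal.add_halves, hsum] at h1
      exact lt_irrefl _ h1
    have key : ∀ D : Set Ω, MeasurableSet D → D ⊆ B → 0 < μ D → μ D ≤ μ B / 2 →
        ∃ B' : Set Ω, MeasurableSet B' ∧ B' ⊆ A ∧ 0 < μ B' ∧ μ B' ≤ μ A * 2⁻¹ ^ (n + 1) := by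
      intro D hD hDB hDpos hDle
      refine ⟨D, hD, hDB.trans hBA, hDpos, ?_⟩
      calc μ D ≤ μ B / 2 := hDle
        _ = μ B * 2⁻¹ := by rw [ENNReal.div_eq_inv_mul, mul_comm]
        _ ≤ μ A * 2⁻¹ ^ n * 2⁻¹ := mul_le_mul_left hBle _
        _ = μ A * 2⁻¹ ^ (n + 1) := by rw [mul_assoc, ← pow_succ]
    rcases hhalf with h | h
    · exact key C hC hCB hCpos h
    · exact key (B \ C) (hB.diff hC) Set.diff_subset hdpos h

/-- From an atom-free measure, inside any finite-positive-measure set there is a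
positive-measure subset of measure at most `K`. -/
lemma smallSubsetK {Ω : Type*} [MeasurableSpace Ω] {μ : Measure Ω} (hμ : AtomFree μ)
    {A : Set Ω} (hA : MeasurableSet A) (hpos : 0 < μ A) (hfin : μ A ≠ ∞)
    {K : ℝ≥0∞} (hK0 : 0 < K) :
    ∃ B : Set Ω, MeasurableSet B ∧ B ⊆ A ∧ 0 < μ B ∧ μ B ≤ K := by
  rcases le_or_gt (μ A) K with h | h
  · exact ⟨A, hA, subset_rfl, hpos, h⟩
  · have hdiv : K / μ A ≠ 0 := by
      simp [ENNReal.div_eq_zero_iff, hK0.ne', hfin]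
    obtain ⟨n, hn⟩ := ENNReal.exists_inv_two_pow_lt hdiv
    obtain ⟨B, hB, hBA, hBpos, hBle⟩ := shrink hμ n A hA hpos
    refine ⟨B, hB, hBA, hBpos, hBle.trans ?_⟩
    calc μ A * 2⁻¹ ^ n ≤ μ A * (K / μ A) := mul_le_mul_right hn.le _
      _ ≤ K := ENNReal.mul_div_le

/-- for an atom-free σ-finite measure space and `K ∈ (0, μ(Ω))`, the
largest-K-norm is a norm on `L¹(Ω)`: it is subadditive, absolutely homogeneous, and
positive definite (`|u|_K > 0` whenever `u ≠ 0` in `L¹`). -/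
theorem stmt5 {Ω : Type*} [MeasurableSpace Ω] (μ : Measure Ω) [SigmaFinite μ]
    (hμ : AtomFree μ) (K : ℝ≥0∞) (hK0 : 0 < K) (hK : K < μ Set.univ) :
    (∀ u v : Ω → ℝ, Integrable u μ → Integrable v μ →
      largestK μ K (u + v) ≤ largestK μ K u + largestK μ K v) ∧
    (∀ (c : ℝ) (u : Ω → ℝ), Integrable u μ →
      largestK μ K (c • u) = |c| * largestK μ K u) ∧
    (∀ u : Ω → ℝ, Integrable u μ → ¬ (u =ᵐ[μ] 0) → 0 < largestK μ K u) := by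
  refine ⟨?_, ?_, ?_⟩
  · -- subadditivity
    intro u v hu hv
    apply csSup_le ⟨0, largestK_set_nonempty μ K _⟩
    rintro r ⟨A, hA, hAK, rfl⟩
    have h1 : ∫ x in A, |u x + v x| ∂μ ≤ ∫ x in A, (|u x| + |v x|) ∂μ := by
      apply integral_mono ((hu.add hv).abs.integrableOn)
        (hu.abs.integrableOn.add hv.abs.integrableOn)
      intro x; exact abs_add_le _ _
    have h2 : ∫ x in A, (|u x| + |v x|) ∂μ = (∫ x in A, |u x| ∂μ) + ∫ x in A, |v x| ∂μ :=
      integral_add hu.abs.integrableOn hv.abs.integrableOn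
    calc ∫ x in A, |(u + v) x| ∂μ = ∫ x in A, |u x + v x| ∂μ := rfl
      _ ≤ (∫ x in A, |u x| ∂μ) + ∫ x in A, |v x| ∂μ := by rw [h2] at h1; exact h1
      _ ≤ largestK μ K u + largestK μ K v :=
        add_le_add (le_largestK hu hA hAK) (le_largestK hv hA hAK)
  · -- homogeneity
    intro c u hu
    rcases eq_or_ne c 0 with rfl | hc
    · simp only [abs_zero, zero_mul]
      apply le_antisymm
      · apply csSup_le ⟨0, largestK_set_nonempty μ K _⟩
        rintro r ⟨A, hA, hAK, rfl⟩
        simp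
      · exact le_csSup ⟨0, by rintro r ⟨A, hA, hAK, rfl⟩; simp⟩ (largestK_set_nonempty μ K _)
    · have habs : 0 < |c| := abs_pos.mpr hc
      have hcu : Integrable (c • u) μ := hu.smul c
      apply le_antisymm
      · apply csSup_le ⟨0, largestK_set_nonempty μ K _⟩
        rintro r ⟨A, hA, hAK, rfl⟩
        have : ∫ x in A, |(c • u) x| ∂μ = |c| * ∫ x in A, |u x| ∂μ := by
          simp only [Pi.smul_apply, smul_eq_mul, abs_mul]
          exact integral_const_mul _ _
        rw [this]
        exact mul_le_mul_of_nonneg_left (le_largestK hu hA hAK) habs.le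
      · rw [← le_div_iff₀' habs]
        apply csSup_le ⟨0, largestK_set_nonempty μ K _⟩
        rintro r ⟨A, hA, hAK, rfl⟩
        rw [le_div_iff₀' habs]
        have : |c| * ∫ x in A, |u x| ∂μ = ∫ x in A, |(c • u) x| ∂μ := by
          simp only [Pi.smul_apply, smul_eq_mul, abs_mul]
          exact (integral_const_mul _ _).symm
        rw [this]
        exact le_largestK hcu hA hAK
  · -- positivity
    intro u hu hne
    set g := hu.aestronglyMeasurable.mk u with hgdef
    have hg : Measurable g := hu.aestronglyMeasurable.measurable_mk.mono le_rfl le_rfl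
    have hug : u =ᵐ[μ] g := hu.aestronglyMeasurable.ae_eq_mk
    have hgne : ¬ (g =ᵐ[μ] 0) := fun h => hne (hug.trans h)
    have hgint : Integrable g μ := hu.congr hug
    -- find n with positive measure of {x | 1/(n+1) ≤ |g x|}
    have hpos : μ {x | g x ≠ 0} ≠ 0 := by
      intro h
      exact hgne (ae_iff.mpr (by simpa using h))
    have hcover : {x | g x ≠ 0} ⊆ ⋃ n : ℕ, {x | (1:ℝ)/(n+1) ≤ |g x|} := by
      intro x hx
      have : 0 < |g x| := abs_pos.mpr hx
      obtain ⟨n, hn⟩ := exists_nat_one_div_lt this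
      exact Set.mem_iUnion.mpr ⟨n, hn.le⟩
    have : ∃ n : ℕ, μ {x | (1:ℝ)/(n+1) ≤ |g x|} ≠ 0 := by
      by_contra h
      push_neg at h
      exact hpos (measure_mono_null hcover (measure_iUnion_null h))
    obtain ⟨n, hn⟩ := this
    set ε : ℝ := 1/(n+1) with hε
    have hε0 : 0 < ε := by positivity
    set E : Set Ω := {x | ε ≤ |g x|} with hE
    have hEm : MeasurableSet E := measurableSet_le measurable_const hg.abs
    have hEfin : μ E < ∞ := by
      have := hgint.measure_norm_ge_lt_top hε0
      simpa [hE, Real.norm_eq_abs] using this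
    obtain ⟨B, hB, hBE, hBpos, hBK⟩ :=
      smallSubsetK hμ hEm (pos_iff_ne_zero.mpr hn) hEfin.ne hK0
    have hBfin : μ B < ∞ := lt_of_le_of_lt (measure_mono hBE) hEfin
    have hlow : ε * (μ B).toReal ≤ ∫ x in B, |g x| ∂μ := by
      apply setIntegral_ge_of_const_le_real hB hBfin.ne
      · intro x hx; exact hBE hx
      · exact hgint.abs.integrableOn
    have heq : ∫ x in B, |g x| ∂μ = ∫ x in B, |u x| ∂μ := by
      apply integral_congr_ae
      filter_upwards [ae_restrict_of_ae hug] with x hx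
      rw [hx]
    have htR : 0 < (μ B).toReal := ENNReal.toReal_pos hBpos.ne' hBfin.ne
    calc (0:ℝ) < ε * (μ B).toReal := by positivity
      _ ≤ ∫ x in B, |g x| ∂μ := hlow
      _ = ∫ x in B, |u x| ∂μ := heq
      _ ≤ largestK μ K u := le_largestK hu hB hBK
end

section
/- Let (Ω, 𝒜, μ) be an atom-free σ-finite measure space, u ∈ L^1(Ω), and K ∈ (0, μ(Ω)). Then |u|_K = sup { ∫_Ω d|u| dμ : d ∈ L^∞(Ω), 0 ≤ d ≤ 1, ‖d‖_1 ≤ K }, both this supremum and the supremum over characteristic functions in the definition of |u|_K are attained, and if μ(supp u) ≥ K then any maximizer d satisfies ‖d‖_1 = K. -/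
open MeasureTheory Set
open scoped ENNReal

lemma small_sets {Ω : Type*} [MeasurableSpace Ω] {μ : Measure Ω} (hμ : AtomFree μ)
    {A : Set Ω} (hA : MeasurableSet A) (hA0 : 0 < μ A) (hAfin : μ A < ⊤)
    {ε : ℝ≥0∞} (hε : 0 < ε) :
    ∃ B : Set Ω, MeasurableSet B ∧ B ⊆ A ∧ 0 < μ B ∧ μ B ≤ ε := by
  have step : ∀ n : ℕ, ∃ B : Set Ω, MeasurableSet B ∧ B ⊆ A ∧ 0 < μ B ∧ μ B ≤ μ A / 2 ^ n := by
    intro n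
    induction n with
    | zero => exact ⟨A, hA, subset_rfl, hA0, by simp⟩
    | succ n ih =>
      obtain ⟨B, hB, hBA, hB0, hBle⟩ := ih
      obtain ⟨D, hD, hDB, hD0, hD0'⟩ := hμ B hB hB0
      have hsum : μ D + μ (B \ D) = μ B := by
        rw [measure_add_diff hD.nullMeasurableSet, union_eq_self_of_subset_left hDB]
      rcases le_total (μ D) (μ (B \ D)) with h | h
      · refine ⟨D, hD, hDB.trans hBA, hD0, ?_⟩
        have h2 : 2 * μ D ≤ μ B := by
          rw [two_mul]; calc μ D + μ D ≤ μ D + μ (B \ D) := by gcongr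
          _ = μ B := hsum
        calc μ D ≤ μ B / 2 := by
              rw [ENNReal.le_div_iff_mul_le (by norm_num) (by norm_num), mul_comm]; exact h2
        _ ≤ μ A / 2 ^ n / 2 := by gcongr
        _ = μ A / 2 ^ (n + 1) := by rw [pow_succ, ENNReal.div_eq_inv_mul, ENNReal.div_eq_inv_mul, ENNReal.div_eq_inv_mul,
                ENNReal.mul_inv (by simp) (by simp)]; ring
      · refine ⟨B \ D, hB.diff hD, (diff_subset).trans hBA, hD0', ?_⟩
        have h2 : 2 * μ (B \ D) ≤ μ B := by
          rw [two_mul]; calc μ (B \ D) + μ (B \ D) ≤ μ D + μ (B \ D) := by gcongr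
          _ = μ B := hsum
        calc μ (B \ D) ≤ μ B / 2 := by
              rw [ENNReal.le_div_iff_mul_le (by norm_num) (by norm_num), mul_comm]; exact h2
        _ ≤ μ A / 2 ^ n / 2 := by gcongr
        _ = μ A / 2 ^ (n + 1) := by rw [pow_succ, ENNReal.div_eq_inv_mul, ENNReal.div_eq_inv_mul, ENNReal.div_eq_inv_mul,
                ENNReal.mul_inv (by simp) (by simp)]; ring
  rcases eq_top_or_lt_top ε with hεt | hεt
  · exact ⟨A, hA, subset_rfl, hA0, by simp [hεt]⟩
  · have hdiv : μ A / ε ≠ ⊤ := (ENNReal.div_lt_top hAfin.ne hε.ne').ne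
    obtain ⟨n, hn⟩ := ENNReal.exists_nat_gt hdiv
    obtain ⟨B, hB, hBA, hB0, hBle⟩ := step n
    refine ⟨B, hB, hBA, hB0, hBle.trans ?_⟩
    have hn2 : μ A / ε < 2 ^ n := hn.trans_le (by exact_mod_cast (Nat.lt_two_pow_self (n := n)) |>.le)
    have : μ A < 2 ^ n * ε := by
      rw [← ENNReal.div_lt_iff (Or.inl hε.ne') (Or.inl hεt.ne)]; exact hn2
    rw [ENNReal.div_le_iff_le_mul (Or.inl (by positivity)) (Or.inr hε.ne')]
    exact this.le.trans (le_of_eq (mul_comm _ _))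


lemma sierpinski {Ω : Type*} [MeasurableSpace Ω] {μ : Measure Ω} (hμ : AtomFree μ)
    {A : Set Ω} (hA : MeasurableSet A) (hAfin : μ A < ⊤) {c : ℝ≥0∞} (hc : c ≤ μ A) :
    ∃ B : Set Ω, MeasurableSet B ∧ B ⊆ A ∧ μ B = c := by
  classical
  set P : Set Ω → Prop := fun B => MeasurableSet B ∧ B ⊆ A ∧ μ B ≤ c with hP
  set s : Set Ω → ℝ≥0∞ := fun B => sSup {m | ∃ C, P C ∧ B ⊆ C ∧ m = μ C} with hs
  have hcne : c ≠ ⊤ := (hc.trans_lt hAfin).ne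
  have hsle : ∀ B, s B ≤ c := by
    intro B
    apply sSup_le
    rintro m ⟨C, hC, -, rfl⟩
    exact hC.2.2
  have hstep : ∀ (n : ℕ) (B : Set Ω), P B → ∃ C, P C ∧ B ⊆ C ∧ s B ≤ μ C + 2⁻¹ ^ n := by
    intro n B hB
    rcases le_or_gt (s B) (μ B + 2⁻¹ ^ n) with h | h
    · exact ⟨B, hB, subset_rfl, h⟩
    · have hε : (2 : ℝ≥0∞)⁻¹ ^ n < s B := lt_of_le_of_lt (le_add_self) h
      have hb : s B - 2⁻¹ ^ n < s B :=
        ENNReal.sub_lt_self ((hsle B).trans_lt hcne.lt_top).ne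
          (lt_of_le_of_lt zero_le hε).ne' (ENNReal.pow_ne_zero (by norm_num) n)
      obtain ⟨m, hm, hlt⟩ := lt_sSup_iff.mp hb
      obtain ⟨C, hC, hBC, rfl⟩ := hm
      refine ⟨C, hC, hBC, ?_⟩
      calc s B = (s B - 2⁻¹ ^ n) + 2⁻¹ ^ n := (tsub_add_cancel_of_le hε.le).symm
      _ ≤ μ C + 2⁻¹ ^ n := by gcongr
  choose g hg1 hg2 hg3 using hstep
  let F : ℕ → {B : Set Ω // P B} := fun n =>
    Nat.rec ⟨∅, MeasurableSet.empty, empty_subset A, by simp⟩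
      (fun n p => ⟨g n p.1 p.2, hg1 n p.1 p.2⟩) n
  have hFsucc : ∀ n, (F n).1 ⊆ (F (n+1)).1 := fun n => hg2 n (F n).1 (F n).2
  have hFs : ∀ n, s (F n).1 ≤ μ (F (n+1)).1 + 2⁻¹ ^ n := fun n => hg3 n (F n).1 (F n).2
  have hmono : Monotone fun n => (F n).1 := monotone_nat_of_le_succ hFsucc
  set B : Set Ω := ⋃ n, (F n).1 with hBdef
  have hBmeas : MeasurableSet B := MeasurableSet.iUnion fun n => (F n).2.1
  have hBA : B ⊆ A := iUnion_subset fun n => (F n).2.2.1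
  have hBmu : μ B = ⨆ n, μ (F n).1 := hmono.directed_le.measure_iUnion
  have hBlec : μ B ≤ c := by
    rw [hBmu]; exact iSup_le fun n => (F n).2.2.2
  refine ⟨B, hBmeas, hBA, ?_⟩
  by_contra hne
  have hlt : μ B < c := lt_of_le_of_ne hBlec hne
  have hBfin : μ B ≠ ⊤ := (hlt.trans_le hc |>.trans hAfin).ne
  have hdiff : 0 < μ (A \ B) := by
    by_contra h0
    push_neg at h0
    have : μ A ≤ μ B := by
      calc μ A ≤ μ (B ∪ (A \ B)) := measure_mono (fun x hx => by
            by_cases hxB : x ∈ B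
            · exact Or.inl hxB
            · exact Or.inr ⟨hx, hxB⟩)
      _ ≤ μ B + μ (A \ B) := measure_union_le _ _
      _ ≤ μ B := by
            have : μ (A \ B) = 0 := le_antisymm h0 zero_le
            simp [this]
    exact absurd (hc.trans this) hlt.not_ge
  obtain ⟨D, hD, hDAB, hD0, hDle⟩ := small_sets hμ (hA.diff hBmeas) hdiff
    (lt_of_le_of_lt (measure_mono diff_subset) hAfin) (tsub_pos_of_lt hlt)
  have hDdisj : Disjoint B D := by
    refine Set.disjoint_left.mpr fun x hxB hxD => (hDAB hxD).2 hxB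
  have hkey : ∀ n : ℕ, μ D ≤ 2⁻¹ ^ n := by
    intro n
    have hC : P (B ∪ D) := by
      refine ⟨hBmeas.union hD, union_subset hBA (hDAB.trans diff_subset), ?_⟩
      rw [measure_union hDdisj hD]
      calc μ B + μ D ≤ μ B + (c - μ B) := by gcongr
      _ = c := add_tsub_cancel_of_le hlt.le
    have hmem : μ (B ∪ D) ∈ {m | ∃ C, P C ∧ (F n).1 ⊆ C ∧ m = μ C} :=
      ⟨B ∪ D, hC, (subset_iUnion (fun n => (F n).1) n).trans subset_union_left, rfl⟩
    have h1 : μ B + μ D ≤ s (F n).1 := by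
      rw [← measure_union hDdisj hD]; exact le_sSup hmem
    have h2 : μ (F (n+1)).1 ≤ μ B := measure_mono (subset_iUnion (fun n => (F n).1) (n+1))
    have h3 : μ B + μ D ≤ μ B + 2⁻¹ ^ n := by
      calc μ B + μ D ≤ μ (F (n+1)).1 + 2⁻¹ ^ n := h1.trans (hFs n)
      _ ≤ μ B + 2⁻¹ ^ n := by gcongr
    exact (ENNReal.add_le_add_iff_left hBfin).mp h3
  obtain ⟨n, hn⟩ := ENNReal.exists_inv_two_pow_lt hD0.ne'
  exact absurd (hkey n) hn.not_ge

lemma key {Ω : Type*} [MeasurableSpace Ω] {μ : Measure Ω} (hμ : AtomFree μ)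
    {u : Ω → ℝ} (hu : Integrable u μ) {K : ℝ≥0∞} (hK0 : 0 < K) (hKtop : K ≠ ⊤) :
    ∃ A : Set Ω, MeasurableSet A ∧ μ A ≤ K ∧
      (∀ d : Ω → ℝ, AEStronglyMeasurable d μ → (∀ᵐ x ∂μ, 0 ≤ d x ∧ d x ≤ 1) →
        (∫⁻ x, ‖d x‖₊ ∂μ) ≤ K → ∫ x, d x * |u x| ∂μ ≤ ∫ x in A, |u x| ∂μ) ∧
      (K ≤ μ (Function.support u) →
        ∀ d : Ω → ℝ, AEStronglyMeasurable d μ → (∀ᵐ x ∂μ, 0 ≤ d x ∧ d x ≤ 1) →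
          (∫⁻ x, ‖d x‖₊ ∂μ) ≤ K → ∫ x, d x * |u x| ∂μ = ∫ x in A, |u x| ∂μ →
          (∫⁻ x, ‖d x‖₊ ∂μ) = K) := by
  classical
  obtain ⟨g, hgm, hgu⟩ : ∃ g : Ω → ℝ, Measurable g ∧ u =ᵐ[μ] g :=
    ⟨hu.1.mk u, hu.1.measurable_mk, hu.1.ae_eq_mk⟩
  set f : Ω → ℝ := fun x => |g x| with hfdef
  have hfm : Measurable f := hgm.abs
  have hfnn : ∀ x, 0 ≤ f x := fun x => abs_nonneg _
  have hfu : (fun x => |u x|) =ᵐ[μ] f := hgu.mono fun x hx => by simp [hfdef, hx]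
  have hfi : Integrable f μ := hu.abs.congr hfu
  -- generic facts about admissible d
  have hdff : ∀ (d : Ω → ℝ), AEStronglyMeasurable d μ → (∀ᵐ x ∂μ, 0 ≤ d x ∧ d x ≤ 1) →
      Integrable (fun x => d x * f x) μ := by
    intro d hdm hd
    refine hfi.mono (hdm.mul hfm.aestronglyMeasurable) (hd.mono fun x ⟨h0, h1⟩ => ?_)
    rw [norm_mul]
    calc ‖d x‖ * ‖f x‖ ≤ 1 * ‖f x‖ := by
          apply mul_le_mul_of_nonneg_right _ (norm_nonneg _)
          rw [Real.norm_eq_abs, abs_of_nonneg h0]; exact h1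
    _ = ‖f x‖ := one_mul _
  have hdu_df : ∀ d : Ω → ℝ, ∫ x, d x * |u x| ∂μ = ∫ x, d x * f x ∂μ := fun d =>
    integral_congr_ae (hfu.mono fun x hx => by dsimp only at hx ⊢; rw [hx])
  have hAu_Af : ∀ A : Set Ω, (∫ x in A, |u x| ∂μ) = ∫ x in A, f x ∂μ := fun A =>
    integral_congr_ae (ae_restrict_of_ae (hfu.mono fun x hx => by rw [hx]))
  have hsuppm : MeasurableSet (Function.support f) := by
    have : Function.support f = f ⁻¹' ({0}ᶜ) := rfl
    rw [this]; exact hfm (measurableSet_singleton 0).compl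
  have hsupp_eq : μ (Function.support u) = μ (Function.support f) := by
    apply measure_congr
    filter_upwards [hgu] with x hx
    simp only [eq_iff_iff]
    show u x ≠ 0 ↔ f x ≠ 0
    rw [hx]
    simp [hfdef, abs_ne_zero]
  rcases le_or_gt (μ (Function.support f)) K with hc | hc
  · -- Case 1 : the support is small
    set A := Function.support f with hA
    have hAK : μ A ≤ K := hc
    have hIA : (∫ x in A, f x ∂μ) = ∫ x, f x ∂μ := by
      rw [← integral_indicator hsuppm, Set.indicator_eq_self.mpr subset_rfl]
    have hbound : ∀ d : Ω → ℝ, AEStronglyMeasurable d μ → (∀ᵐ x ∂μ, 0 ≤ d x ∧ d x ≤ 1) →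
        ∫ x, d x * f x ∂μ ≤ ∫ x in A, f x ∂μ := by
      intro d hdm hd
      rw [hIA]
      exact integral_mono_ae (hdff d hdm hd) hfi
        (hd.mono fun x ⟨h0, h1⟩ => mul_le_of_le_one_left (hfnn x) h1)
    refine ⟨A, hsuppm, hAK, ?_, ?_⟩
    · intro d hdm hd _
      rw [hdu_df, hAu_Af]; exact hbound d hdm hd
    · intro hKs d hdm hd hd1 hmax
      have hAKeq : μ A = K := le_antisymm hAK (by rw [← hsupp_eq]; exact hKs)
      rw [hdu_df, hAu_Af] at hmax
      have hzero : ∫ x, (f x - d x * f x) ∂μ = 0 := by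
        rw [integral_sub hfi (hdff d hdm hd), hmax, hIA, sub_self]
      have hnn : 0 ≤ᵐ[μ] fun x => f x - d x * f x := by
        filter_upwards [hd] with x ⟨h0, h1⟩
        have := mul_le_of_le_one_left (hfnn x) h1
        simpa using this
      have hae : (fun x => f x - d x * f x) =ᵐ[μ] 0 :=
        (integral_eq_zero_iff_of_nonneg_ae hnn (hfi.sub (hdff d hdm hd))).mp hzero
      have hone : ∀ᵐ x ∂μ, x ∈ A → (‖d x‖₊ : ℝ≥0∞) = 1 := by
        filter_upwards [hae, hd] with x hx ⟨h0, h1⟩ hxA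
        have hfx : f x ≠ 0 := hxA
        have : f x * (1 - d x) = 0 := by simp only [Pi.zero_apply] at hx; ring_nf; linarith [hx]
        have hd1' : d x = 1 := by
          rcases mul_eq_zero.mp this with h | h
          · exact absurd h hfx
          · linarith
        simp [hd1']
      have hlow : K ≤ ∫⁻ x, ‖d x‖₊ ∂μ := by
        calc K = μ A := hAKeq.symm
        _ = ∫⁻ x in A, 1 ∂μ := (setLIntegral_one A).symm
        _ = ∫⁻ x in A, ‖d x‖₊ ∂μ :=
            (lintegral_congr_ae ((ae_restrict_iff' hsuppm).mpr hone)).symm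
        _ ≤ ∫⁻ x, ‖d x‖₊ ∂μ := setLIntegral_le_lintegral A _
      exact le_antisymm hd1 hlow
  · -- Case 2 : the support is large; bathtub construction
    set L : ℝ≥0∞ := ∫⁻ x, ENNReal.ofReal (f x) ∂μ with hLdef
    have hLnorm : L = ∫⁻ x, (‖f x‖₊ : ℝ≥0∞) ∂μ :=
      lintegral_congr fun x => (Real.enorm_eq_ofReal (hfnn x)).symm
    have hL : L ≠ ⊤ := by rw [hLnorm]; exact hfi.2.ne
    have cheby : ∀ t : ℝ, 0 < t → μ {x | t ≤ f x} ≤ L / ENNReal.ofReal t := by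
      intro t ht
      have h1 : {x | t ≤ f x} ⊆ {x | ENNReal.ofReal t ≤ ENNReal.ofReal (f x)} :=
        fun x hx => ENNReal.ofReal_le_ofReal hx
      calc μ {x | t ≤ f x} ≤ μ {x | ENNReal.ofReal t ≤ ENNReal.ofReal (f x)} := measure_mono h1
      _ ≤ L / ENNReal.ofReal t := meas_ge_le_lintegral_div
            (hfm.ennreal_ofReal.aemeasurable) (by simpa using ht) ENNReal.ofReal_ne_top
    set T : Set ℝ := {t : ℝ | 0 < t ∧ μ {x | t < f x} ≤ K} with hTdef
    have hTne : T.Nonempty := by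
      obtain ⟨n, hn⟩ := ENNReal.exists_nat_gt (ENNReal.div_lt_top hL hK0.ne').ne
      refine ⟨(n : ℝ) + 1, by positivity, ?_⟩
      have hofReal : ENNReal.ofReal ((n : ℝ) + 1) = (n : ℝ≥0∞) + 1 := by
        rw [ENNReal.ofReal_add (by positivity) zero_le_one]
        simp [ENNReal.ofReal_natCast]
      have hLle : L ≤ K * ENNReal.ofReal ((n : ℝ) + 1) := by
        rw [hofReal]
        have h2 : L < (n : ℝ≥0∞) * K := by
          rw [← ENNReal.div_lt_iff (Or.inl hK0.ne') (Or.inl hKtop)]; exact hn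
        calc L ≤ (n : ℝ≥0∞) * K := h2.le
        _ ≤ K * ((n : ℝ≥0∞) + 1) := by rw [mul_comm]; gcongr; exact le_self_add
      calc μ {x | (n : ℝ) + 1 < f x} ≤ μ {x | (n : ℝ) + 1 ≤ f x} :=
            measure_mono (setOf_subset_setOf.mpr fun x hx => hx.le)
      _ ≤ L / ENNReal.ofReal ((n : ℝ) + 1) := cheby _ (by positivity)
      _ ≤ K := ENNReal.div_le_of_le_mul hLle
    have hTbdd : BddBelow T := ⟨0, fun t ht => ht.1.le⟩
    set ts : ℝ := sInf T with htsdef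
    have hts0 : 0 ≤ ts := le_csInf hTne fun t ht => ht.1.le
    have hstar : μ {x | ts < f x} ≤ K := by
      have hunion : {x | ts < f x} = ⋃ n : ℕ, {x | ts + 1 / (n + 1) < f x} := by
        ext x
        simp only [mem_setOf_eq, mem_iUnion]
        constructor
        · intro hx
          obtain ⟨n, hn⟩ := exists_nat_one_div_lt (sub_pos.mpr hx)
          exact ⟨n, by linarith⟩
        · rintro ⟨n, hn⟩
          have : (0:ℝ) < 1 / (n + 1) := by positivity
          linarith
      rw [hunion, Directed.measure_iUnion]
      · apply iSup_le
        intro n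
        have h1 : ts < ts + 1 / (n + 1) := by
          have : (0:ℝ) < 1 / (n + 1) := by positivity
          linarith
        obtain ⟨s, hsT, hs⟩ := exists_lt_of_csInf_lt hTne h1
        calc μ {x | ts + 1 / (n + 1) < f x} ≤ μ {x | s < f x} :=
              measure_mono fun x hx => lt_trans hs hx
        _ ≤ K := hsT.2
      · apply Monotone.directed_le
        intro n m hnm x hx
        simp only [mem_setOf_eq] at hx ⊢
        have : (1:ℝ) / (m + 1) ≤ 1 / (n + 1) := by
          apply one_div_le_one_div_of_le (by positivity)
          exact_mod_cast by omega
        linarith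
    have hpos : 0 < ts := by
      rcases hts0.lt_or_eq with h | h
      · exact h
      · exfalso
        have hsub : Function.support f ⊆ {x | ts < f x} := by
          intro x hx
          have : 0 < f x := lt_of_le_of_ne (hfnn x) (Ne.symm hx)
          simp only [mem_setOf_eq, ← h]; exact this
        exact absurd ((measure_mono hsub).trans hstar) hc.not_ge
    have hge : K ≤ μ {x | ts ≤ f x} := by
      set S : ℕ → Set Ω := fun n => {x | ts - ts / (n + 2) < f x} with hSdef
      have htn_pos : ∀ n : ℕ, 0 < ts - ts / (n + 2) := by
        intro n
        have h1 : ts / (n + 2) < ts := by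
          apply div_lt_self hpos
          have : (0:ℝ) ≤ (n:ℝ) := Nat.cast_nonneg n
          linarith
        linarith
      have hSmeas : ∀ n, MeasurableSet (S n) := fun n => hfm measurableSet_Ioi
      have hSinter : ⋂ n, S n = {x | ts ≤ f x} := by
        ext x
        simp only [mem_iInter, hSdef, mem_setOf_eq]
        constructor
        · intro h
          by_contra hlt
          push_neg at hlt
          obtain ⟨n, hn⟩ := exists_nat_gt (ts / (ts - f x))
          have hpos2 : (0:ℝ) < ts - f x := by linarith
          have hn2 : ts / (ts - f x) < (n:ℝ) + 2 := by
            calc ts / (ts - f x) < n := hn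
            _ ≤ (n:ℝ) + 2 := by linarith
          have : ts / ((n:ℝ) + 2) < ts - f x := by
            rw [div_lt_iff₀ (by positivity)] at hn2 ⊢
            nlinarith
          have := h n
          linarith
        · intro h n
          have h1 : (0:ℝ) < ts / ((n:ℝ) + 2) := by positivity
          linarith
      have hSanti : Directed (· ⊇ ·) S := by
        apply Antitone.directed_ge
        intro n m hnm x hx
        simp only [hSdef, mem_setOf_eq] at hx ⊢
        have h1 : ts / (m + 2) ≤ ts / (n + 2) := by
          apply div_le_div_of_nonneg_left hpos.le (by positivity)
          have : (n:ℝ) ≤ m := by exact_mod_cast hnm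
          linarith
        linarith
      have hSfin : ∃ n, μ (S n) ≠ ⊤ := by
        refine ⟨0, ?_⟩
        have h1 : S 0 ⊆ {x | ts - ts / 2 ≤ f x} := by
          intro x hx
          simp only [hSdef, mem_setOf_eq] at hx ⊢
          norm_num at hx ⊢
          linarith
        have h2 := (measure_mono h1).trans (cheby _ (by simpa using htn_pos 0))
        exact (h2.trans_lt (ENNReal.div_lt_top hL
          (ENNReal.ofReal_pos.mpr (by simpa using htn_pos 0)).ne')).ne
      have hiInf : μ (⋂ n, S n) = ⨅ n, μ (S n) :=
        Directed.measure_iInter (fun n => (hSmeas n).nullMeasurableSet) hSanti hSfin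
      rw [← hSinter, hiInf]
      refine le_iInf fun n => ?_
      have hnotT : (ts - ts / (n + 2)) ∉ T := fun hmem =>
        absurd (csInf_le hTbdd hmem) (by
          have h1 : ts / (n + 2) > 0 := by positivity
          simp only [← htsdef]
          linarith)
      simp only [hTdef, mem_setOf_eq, not_and, not_le] at hnotT
      exact (hnotT (htn_pos n)).le
    have hfinige : μ {x | ts ≤ f x} < ⊤ :=
      (cheby ts hpos).trans_lt (ENNReal.div_lt_top hL (ENNReal.ofReal_pos.mpr hpos).ne')
    have hltmeas : MeasurableSet {x | ts < f x} := hfm measurableSet_Ioi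
    have hlemeas : MeasurableSet {x | ts ≤ f x} := hfm measurableSet_Ici
    have hsubset : {x | ts < f x} ⊆ {x | ts ≤ f x} := setOf_subset_setOf.mpr fun x hx => hx.le
    set M : Set Ω := {x | ts ≤ f x} \ {x | ts < f x} with hMdef
    have hMmeas : MeasurableSet M := hlemeas.diff hltmeas
    have hsum : μ {x | ts < f x} + μ M = μ {x | ts ≤ f x} := by
      rw [hMdef, measure_add_diff hltmeas.nullMeasurableSet,
        union_eq_self_of_subset_left hsubset]
    have hcM : K - μ {x | ts < f x} ≤ μ M := by
      rw [tsub_le_iff_left, hsum]; exact hge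
    obtain ⟨B, hBmeas, hBM, hBc⟩ := sierpinski hμ hMmeas
      (lt_of_le_of_lt (measure_mono diff_subset) hfinige) hcM
    set A : Set Ω := {x | ts < f x} ∪ B with hAdef
    have hAmeas : MeasurableSet A := hltmeas.union hBmeas
    have hA_ge : A ⊆ {x | ts ≤ f x} :=
      union_subset hsubset (hBM.trans diff_subset)
    have hdisj : Disjoint {x | ts < f x} B :=
      Set.disjoint_left.mpr fun x hx hxB => (hBM hxB).2 hx
    have hAK : μ A = K := by
      rw [hAdef, measure_union hdisj hBmeas, hBc, add_tsub_cancel_of_le hstar]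
    -- the central estimate
    have central : ∀ d : Ω → ℝ, AEStronglyMeasurable d μ → (∀ᵐ x ∂μ, 0 ≤ d x ∧ d x ≤ 1) →
        (∫⁻ x, ‖d x‖₊ ∂μ) ≤ K →
        ∫ x, d x * f x ∂μ + ts * K.toReal ≤ ts * (∫ x, d x ∂μ) + ∫ x in A, f x ∂μ := by
      intro d hdm hd hd1
      have hdint : Integrable d μ := by
        refine ⟨hdm, ?_⟩
        have : (∫⁻ x, ‖d x‖₊ ∂μ) < ⊤ := hd1.trans_lt hKtop.lt_top
        exact this
      have hptwise : ∀ᵐ x ∂μ,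
          d x * f x + A.indicator (fun _ => ts) x ≤ ts * d x + A.indicator f x := by
        filter_upwards [hd] with x ⟨h0, h1⟩
        by_cases hxA : x ∈ A
        · rw [Set.indicator_of_mem hxA, Set.indicator_of_mem hxA]
          have hfx : ts ≤ f x := hA_ge hxA
          nlinarith [mul_nonneg (sub_nonneg.mpr h1) (sub_nonneg.mpr hfx)]
        · rw [Set.indicator_of_notMem hxA, Set.indicator_of_notMem hxA]
          have hfx : f x ≤ ts := by
            by_contra hcon
            exact hxA (Or.inl (by simp only [mem_setOf_eq]; linarith))
          nlinarith
      have hconst : Integrable (A.indicator fun _ => ts) μ :=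
        (integrableOn_const (by rw [hAK]; exact hKtop)).integrable_indicator
          hAmeas
      have hint1 : Integrable (fun x => d x * f x + A.indicator (fun _ => ts) x) μ :=
        (hdff d hdm hd).add hconst
      have hint2 : Integrable (fun x => ts * d x + A.indicator f x) μ :=
        (hdint.const_mul ts).add (hfi.indicator hAmeas)
      have hmono := integral_mono_ae hint1 hint2 hptwise
      rw [integral_add (hdff d hdm hd) hconst,
        integral_add (hdint.const_mul ts) (hfi.indicator hAmeas),
        integral_indicator_const ts hAmeas, integral_indicator hAmeas,
        integral_const_mul, measureReal_def, hAK] at hmono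
      calc ∫ x, d x * f x ∂μ + ts * K.toReal
          = ∫ x, d x * f x ∂μ + K.toReal • ts := by rw [smul_eq_mul, mul_comm]
      _ ≤ ts * ∫ x, d x ∂μ + ∫ x in A, f x ∂μ := hmono
    have hIdK : ∀ d : Ω → ℝ, AEStronglyMeasurable d μ → (∀ᵐ x ∂μ, 0 ≤ d x ∧ d x ≤ 1) →
        ∫ x, d x ∂μ = (∫⁻ x, ‖d x‖₊ ∂μ).toReal := by
      intro d hdm hd
      rw [integral_eq_lintegral_of_nonneg_ae (hd.mono fun x hx => hx.1) hdm]
      congr 1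
      apply lintegral_congr_ae
      filter_upwards [hd] with x ⟨h0, h1⟩
      exact (Real.enorm_eq_ofReal h0).symm
    refine ⟨A, hAmeas, hAK.le, ?_, ?_⟩
    · intro d hdm hd hd1
      rw [hdu_df, hAu_Af]
      have h1 := central d hdm hd hd1
      have h2 : ∫ x, d x ∂μ ≤ K.toReal := by
        rw [hIdK d hdm hd]; exact ENNReal.toReal_mono hKtop hd1
      nlinarith [mul_le_mul_of_nonneg_left h2 hpos.le]
    · intro _ d hdm hd hd1 hmax
      rw [hdu_df, hAu_Af] at hmax
      by_contra hne
      have hlt : (∫⁻ x, ‖d x‖₊ ∂μ) < K := lt_of_le_of_ne hd1 hne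
      have h2 : ∫ x, d x ∂μ < K.toReal := by
        rw [hIdK d hdm hd]
        exact ENNReal.toReal_lt_toReal (hlt.trans_le le_top).ne hKtop |>.mpr hlt
      have h1 := central d hdm hd hd1
      nlinarith [mul_lt_mul_of_pos_left h2 hpos]

/-- in an atom-free σ-finite space,
`|u|_K = sup { ∫ d|u| dμ : d ∈ L^∞, 0 ≤ d ≤ 1, ‖d‖₁ ≤ K }`; both this supremum and the
supremum over characteristic functions are attained; and if `μ(supp u) ≥ K` then every
maximizer `d` satisfies `‖d‖₁ = K`. -/
theorem stmt8 {Ω : Type*} [MeasurableSpace Ω] (μ : Measure Ω) [SigmaFinite μ]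
    (hμ : AtomFree μ) (u : Ω → ℝ) (hu : Integrable u μ)
    (K : ℝ≥0∞) (hK0 : 0 < K) (hK : K < μ Set.univ) :
    largestK μ K u =
      sSup {r : ℝ | ∃ d : Ω → ℝ, AEStronglyMeasurable d μ ∧
        (∀ᵐ x ∂μ, 0 ≤ d x ∧ d x ≤ 1) ∧ (∫⁻ x, ‖d x‖₊ ∂μ) ≤ K ∧
        r = ∫ x, d x * |u x| ∂μ} ∧
    (∃ A : Set Ω, MeasurableSet A ∧ μ A ≤ K ∧ (∫ x in A, |u x| ∂μ) = largestK μ K u) ∧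
    (∃ d : Ω → ℝ, AEStronglyMeasurable d μ ∧ (∀ᵐ x ∂μ, 0 ≤ d x ∧ d x ≤ 1) ∧
      (∫⁻ x, ‖d x‖₊ ∂μ) ≤ K ∧ (∫ x, d x * |u x| ∂μ) = largestK μ K u) ∧
    (K ≤ μ (Function.support u) →
      ∀ d : Ω → ℝ, AEStronglyMeasurable d μ → (∀ᵐ x ∂μ, 0 ≤ d x ∧ d x ≤ 1) →
        (∫⁻ x, ‖d x‖₊ ∂μ) ≤ K → (∫ x, d x * |u x| ∂μ) = largestK μ K u →
        (∫⁻ x, ‖d x‖₊ ∂μ) = K) := by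
  classical
  have hKtop : K ≠ ⊤ := hK.ne_top
  obtain ⟨A, hAmeas, hAK, hbound, hstrict⟩ := key hμ hu hK0 hKtop
  set S1 := {r : ℝ | ∃ A : Set Ω, MeasurableSet A ∧ μ A ≤ K ∧ r = ∫ x in A, |u x| ∂μ}
    with hS1
  set S2 := {r : ℝ | ∃ d : Ω → ℝ, AEStronglyMeasurable d μ ∧
      (∀ᵐ x ∂μ, 0 ≤ d x ∧ d x ≤ 1) ∧ (∫⁻ x, ‖d x‖₊ ∂μ) ≤ K ∧
      r = ∫ x, d x * |u x| ∂μ} with hS2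
  set V := ∫ x in A, |u x| ∂μ with hV
  have hind : ∀ A' : Set Ω, MeasurableSet A' → μ A' ≤ K →
      AEStronglyMeasurable (A'.indicator (fun _ => (1:ℝ))) μ ∧
      (∀ᵐ x ∂μ, 0 ≤ A'.indicator (fun _ => (1:ℝ)) x ∧ A'.indicator (fun _ => (1:ℝ)) x ≤ 1) ∧
      (∫⁻ x, ‖A'.indicator (fun _ => (1:ℝ)) x‖₊ ∂μ) ≤ K ∧
      (∫ x, A'.indicator (fun _ => (1:ℝ)) x * |u x| ∂μ) = ∫ x in A', |u x| ∂μ := by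
    intro A' hA' hA'K
    refine ⟨(measurable_const.indicator hA').aestronglyMeasurable, ?_, ?_, ?_⟩
    · refine Filter.Eventually.of_forall fun x => ?_
      by_cases h : x ∈ A' <;> simp [h]
    · have heq : (fun x => (‖A'.indicator (fun _ => (1:ℝ)) x‖₊ : ℝ≥0∞)) =
          A'.indicator (fun _ => (1:ℝ≥0∞)) := by
        funext x; by_cases h : x ∈ A' <;> simp [h]
      rw [heq, lintegral_indicator hA']
      simpa using hA'K
    · have heq : (fun x => A'.indicator (fun _ => (1:ℝ)) x * |u x|) =
          A'.indicator (fun x => |u x|) := by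
        funext x; by_cases h : x ∈ A' <;> simp [h]
      rw [heq, integral_indicator hA']
  have hS12 : S1 ⊆ S2 := by
    rintro r ⟨A', hA', hA'K, rfl⟩
    obtain ⟨h1, h2, h3, h4⟩ := hind A' hA' hA'K
    exact ⟨_, h1, h2, h3, h4.symm⟩
  have hVmem1 : V ∈ S1 := ⟨A, hAmeas, hAK, rfl⟩
  have hboundS2 : ∀ r ∈ S2, r ≤ V := by
    rintro r ⟨d, hdm, hd, hd1, rfl⟩
    exact hbound d hdm hd hd1
  have hVmem2 : V ∈ S2 := hS12 hVmem1
  have hsup2 : sSup S2 = V :=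
    le_antisymm (csSup_le ⟨V, hVmem2⟩ hboundS2) (le_csSup ⟨V, hboundS2⟩ hVmem2)
  have hsup1 : sSup S1 = V :=
    le_antisymm (csSup_le ⟨V, hVmem1⟩ fun r hr => hboundS2 r (hS12 hr))
      (le_csSup ⟨V, fun r hr => hboundS2 r (hS12 hr)⟩ hVmem1)
  have hlarg : largestK μ K u = V := hsup1
  refine ⟨by rw [hlarg, hsup2], ⟨A, hAmeas, hAK, hlarg.symm⟩, ?_, ?_⟩
  · obtain ⟨h1, h2, h3, h4⟩ := hind A hAmeas hAK
    exact ⟨_, h1, h2, h3, by rw [h4, hlarg]⟩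
  · intro hKs d hdm hd hd1 hmax
    exact hstrict hKs d hdm hd hd1 (by rw [hmax, hlarg])
end

section
/- Let (Ω, 𝒜, μ) be an atom-free σ-finite measure space, u ∈ L^1(Ω), v ∈ L^1(Ω) ∩ L^∞(Ω), and K ∈ (0, μ(Ω)). Then ∫_Ω u·v dμ ≤ |u|_K · max(‖v‖_∞, K^{-1}‖v‖_1). -/
open MeasureTheory Set
open scoped ENNReal

lemma halving {Ω : Type*} [MeasurableSpace Ω] {μ : Measure Ω} (hμ : AtomFree μ)
    {A : Set Ω} (hA : MeasurableSet A) (hA0 : 0 < μ A) (hAfin : μ A ≠ ∞) :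
    ∃ B : Set Ω, MeasurableSet B ∧ B ⊆ A ∧ 0 < μ B ∧ 2 * μ B ≤ μ A := by
  obtain ⟨B, hBm, hBA, hB0, hB1⟩ := hμ A hA hA0
  have hsum : μ B + μ (A \ B) = μ A := by
    rw [measure_add_diff hBm.nullMeasurableSet A, union_eq_self_of_subset_left hBA]
  rcases le_total (μ B) (μ (A \ B)) with h | h
  · exact ⟨B, hBm, hBA, hB0, by rw [two_mul, ← hsum]; exact add_le_add le_rfl h⟩
  · exact ⟨A \ B, hA.diff hBm, diff_subset, hB1,
      by rw [two_mul, ← hsum]; exact add_le_add h le_rfl⟩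

lemma smallSubset {Ω : Type*} [MeasurableSpace Ω] {μ : Measure Ω} (hμ : AtomFree μ)
    {C : Set Ω} (hC : MeasurableSet C) (hC0 : 0 < μ C) (hCfin : μ C ≠ ∞)
    {δ : ℝ≥0∞} (hδ : 0 < δ) :
    ∃ D : Set Ω, MeasurableSet D ∧ D ⊆ C ∧ 0 < μ D ∧ μ D ≤ δ := by
  have key : ∀ n : ℕ, ∃ D : Set Ω, MeasurableSet D ∧ D ⊆ C ∧ 0 < μ D ∧
      2 ^ n * μ D ≤ μ C := by
    intro n
    induction n with
    | zero => exact ⟨C, hC, subset_rfl, hC0, by simp⟩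
    | succ n ih =>
      obtain ⟨D, hDm, hDC, hD0, hDle⟩ := ih
      have hDfin : μ D ≠ ∞ := by
        intro h
        rw [h, ENNReal.mul_top (by positivity)] at hDle
        exact hCfin (top_le_iff.mp hDle)
      obtain ⟨D', hD'm, hD'D, hD'0, hD'le⟩ := halving hμ hDm hD0 hDfin
      refine ⟨D', hD'm, hD'D.trans hDC, hD'0, ?_⟩
      calc 2 ^ (n + 1) * μ D' = 2 ^ n * (2 * μ D') := by ring
      _ ≤ 2 ^ n * μ D := by gcongr
      _ ≤ μ C := hDle
  rcases eq_or_ne δ ∞ with rfl | hδtop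
  · obtain ⟨D, h1, h2, h3, _⟩ := key 0
    exact ⟨D, h1, h2, h3, le_top⟩
  obtain ⟨n, hn⟩ : ∃ n : ℕ, μ C / δ < n := ENNReal.exists_nat_gt
    (by simp [ENNReal.div_eq_top, hδ.ne', hCfin])
  obtain ⟨D, h1, h2, h3, h4⟩ := key n
  refine ⟨D, h1, h2, h3, ?_⟩
  have hCn : μ C < 2 ^ n * δ := by
    have : (n : ℝ≥0∞) ≤ 2 ^ n := by
      exact_mod_cast (Nat.lt_two_pow_self (n := n)).le
    calc μ C < n * δ := by
            rwa [← ENNReal.div_lt_iff (Or.inl hδ.ne') (Or.inl hδtop)]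
    _ ≤ 2 ^ n * δ := by gcongr
  have h5 := h4.trans_lt hCn
  rw [ENNReal.mul_lt_mul_iff_right (by positivity) (by simp)] at h5
  exact h5.le



lemma exists_subset_measure_eq_atomFree {Ω : Type*} [MeasurableSpace Ω] {μ : Measure Ω}
    (hμ : AtomFree μ) {E : Set Ω} (hE : MeasurableSet E) (hEfin : μ E ≠ ∞)
    {r : ℝ≥0∞} (hr : r ≤ μ E) :
    ∃ S : Set Ω, MeasurableSet S ∧ S ⊆ E ∧ μ S = r := by
  have hrfin : r ≠ ∞ := fun h => hEfin (top_le_iff.mp (h ▸ hr))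
  -- the type of "states"
  let T := {B : Set Ω // MeasurableSet B ∧ B ⊆ E ∧ μ B ≤ r}
  have step : ∀ b : T, ∃ b' : T, b.1 ⊆ b'.1 ∧
      ∀ D : Set Ω, MeasurableSet D → D ⊆ E \ b.1 → μ D ≤ r - μ b.1 →
        μ D ≤ 2 * (μ b'.1 - μ b.1) := by
    rintro ⟨B, hBm, hBE, hBr⟩
    set M : Set ℝ≥0∞ := {m | ∃ D : Set Ω, MeasurableSet D ∧ D ⊆ E \ B ∧ μ D ≤ r - μ B ∧ μ D = m}
      with hM
    set s := sSup M with hs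
    have hsle : s ≤ r - μ B := sSup_le (by rintro m ⟨D, -, -, hD, rfl⟩; exact hD)
    have hsfin : s ≠ ∞ := fun h =>
      hrfin (top_le_iff.mp ((h ▸ hsle).trans tsub_le_self))
    rcases eq_or_ne s 0 with hs0 | hs0
    · refine ⟨⟨B, hBm, hBE, hBr⟩, subset_rfl, fun D hDm hDE hDr => ?_⟩
      have : μ D ≤ s := le_sSup ⟨D, hDm, hDE, hDr, rfl⟩
      simpa [hs0] using this
    · have hhalf : s / 2 < s := ENNReal.half_lt_self hs0 hsfin
      obtain ⟨m, hmM, hm⟩ := (lt_sSup_iff).mp hhalf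
      obtain ⟨D, hDm, hDE, hDr, rfl⟩ := hmM
      have hdisj : Disjoint B D := (disjoint_sdiff_right).mono_right hDE
      have hBfin : μ B ≠ ∞ := fun h => hrfin (top_le_iff.mp (h ▸ hBr))
      have hunion : μ (B ∪ D) = μ B + μ D := measure_union hdisj hDm
      have hBDr : μ (B ∪ D) ≤ r := by
        rw [hunion]
        calc μ B + μ D ≤ μ B + (r - μ B) := by gcongr
        _ = r := add_tsub_cancel_of_le hBr
      refine ⟨⟨B ∪ D, hBm.union hDm, union_subset hBE (hDE.trans diff_subset), hBDr⟩,
        subset_union_left, fun D' hD'm hD'E hD'r => ?_⟩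
      have h1 : μ D' ≤ s := le_sSup ⟨D', hD'm, hD'E, hD'r, rfl⟩
      have h2 : μ (B ∪ D) - μ B = μ D := by
        rw [hunion, add_comm, ENNReal.add_sub_cancel_right hBfin]
      show μ D' ≤ 2 * (μ (B ∪ D) - μ B)
      rw [h2]
      calc μ D' ≤ s := h1
      _ = 2 * (s / 2) := (ENNReal.mul_div_cancel two_ne_zero ENNReal.ofNat_ne_top).symm
      _ ≤ 2 * μ D := by gcongr
  -- iterate
  let F : T → T := fun b => (step b).choose
  let seq : ℕ → T := fun n => F^[n] ⟨∅, MeasurableSet.empty, empty_subset E, by simp⟩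
  have hseq_succ : ∀ n, seq (n + 1) = F (seq n) := fun n => Function.iterate_succ_apply' F n _
  have hmono : ∀ n, (seq n).1 ⊆ (seq (n + 1)).1 := by
    intro n; rw [hseq_succ]; exact (step (seq n)).choose_spec.1
  have hmono' : Monotone fun n => (seq n).1 :=
    monotone_nat_of_le_succ hmono
  set S : Set Ω := ⋃ n, (seq n).1 with hS
  have hSm : MeasurableSet S := MeasurableSet.iUnion fun n => (seq n).2.1
  have hSE : S ⊆ E := iUnion_subset fun n => (seq n).2.2.1
  have hSmeas : μ S = ⨆ n, μ (seq n).1 :=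
    hmono'.measure_iUnion
  have hSr : μ S ≤ r := by
    rw [hSmeas]; exact iSup_le fun n => (seq n).2.2.2
  refine ⟨S, hSm, hSE, ?_⟩
  by_contra hne
  have hSlt : μ S < r := lt_of_le_of_ne hSr hne
  have hδ : 0 < r - μ S := tsub_pos_of_lt hSlt
  have hES : r - μ S ≤ μ (E \ S) := by
    rw [measure_diff hSE hSm.nullMeasurableSet (ne_top_of_le_ne_top hEfin (measure_mono hSE))]
    exact tsub_le_tsub_right hr _
  obtain ⟨D, hDm, hDE, hD0, hDδ⟩ := smallSubset hμ (hE.diff hSm)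
    (lt_of_lt_of_le hδ hES) (ne_top_of_le_ne_top hEfin (measure_mono diff_subset)) hδ
  -- D is always available at every stage
  have hstep : ∀ n, μ (seq n).1 + μ D / 2 ≤ μ (seq (n + 1)).1 := by
    intro n
    have hsub : D ⊆ E \ (seq n).1 :=
      hDE.trans (diff_subset_diff_right (subset_iUnion (fun n => (seq n).1) n))
    have hle : μ D ≤ r - μ (seq n).1 :=
      hDδ.trans (tsub_le_tsub_left (measure_mono (subset_iUnion (fun n => (seq n).1) n)) r)
    have h2 : μ D ≤ 2 * (μ (seq (n + 1)).1 - μ (seq n).1) := by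
      rw [hseq_succ]
      exact (step (seq n)).choose_spec.2 D hDm hsub hle
    have h3 : μ D / 2 ≤ μ (seq (n + 1)).1 - μ (seq n).1 := by
      calc μ D / 2 ≤ 2 * (μ (seq (n + 1)).1 - μ (seq n).1) / 2 := by gcongr
      _ = μ (seq (n + 1)).1 - μ (seq n).1 := by
          rw [mul_comm, mul_div_assoc, ENNReal.div_self two_ne_zero ENNReal.ofNat_ne_top,
            mul_one]
    calc μ (seq n).1 + μ D / 2 ≤ μ (seq n).1 + (μ (seq (n + 1)).1 - μ (seq n).1) := by gcongr
    _ = μ (seq (n + 1)).1 := add_tsub_cancel_of_le (measure_mono (hmono n))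
  have hlin : ∀ n : ℕ, (n : ℝ≥0∞) * (μ D / 2) ≤ μ (seq n).1 := by
    intro n
    induction n with
    | zero => simp
    | succ n ih =>
      push_cast
      calc ((n : ℝ≥0∞) + 1) * (μ D / 2) = n * (μ D / 2) + μ D / 2 := by ring
      _ ≤ μ (seq n).1 + μ D / 2 := by gcongr
      _ ≤ μ (seq (n + 1)).1 := hstep n
  have hD2 : μ D / 2 ≠ 0 := by
    simp [ENNReal.div_eq_zero_iff, hD0.ne']
  obtain ⟨n, hn⟩ := ENNReal.exists_nat_mul_gt hD2 hrfin
  exact absurd ((hlin n).trans ((seq n).2.2.2)) (not_le.mpr hn)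



lemma key_minlayer {Ω : Type*} [MeasurableSpace Ω] {μ : Measure Ω} (hμ : AtomFree μ)
    {f : Ω → ℝ} (hf : Measurable f) (hf0 : ∀ x, 0 ≤ f x)
    (hfin : ∫⁻ x, ENNReal.ofReal (f x) ∂μ ≠ ∞)
    {K : ℝ≥0∞} (hK0 : K ≠ 0) (hK : K ≠ ∞) :
    ∃ A : Set Ω, MeasurableSet A ∧ μ A ≤ K ∧
      ∫⁻ t in Ioi (0:ℝ), min (μ {x | t < f x}) K ≤ ∫⁻ x in A, ENNReal.ofReal (f x) ∂μ := by
  set L := ∫⁻ x, ENNReal.ofReal (f x) ∂μ with hL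
  set d : ℝ → ℝ≥0∞ := fun t => μ {x | t < f x} with hd
  have hofReal_meas : Measurable fun x => ENNReal.ofReal (f x) :=
    ENNReal.measurable_ofReal.comp hf
  have hmarkov : ∀ t : ℝ, ENNReal.ofReal t * d t ≤ L := by
    intro t
    have h1 : {x | t < f x} ⊆ {x | ENNReal.ofReal t ≤ ENNReal.ofReal (f x)} :=
      fun x hx => ENNReal.ofReal_le_ofReal (le_of_lt hx)
    calc ENNReal.ofReal t * d t ≤ ENNReal.ofReal t *
          μ {x | ENNReal.ofReal t ≤ ENNReal.ofReal (f x)} := by gcongr; exact measure_mono h1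
    _ ≤ L := mul_meas_ge_le_lintegral₀ hofReal_meas.aemeasurable _
  have hdfin : ∀ t : ℝ, 0 < t → d t ≠ ∞ := by
    intro t ht h
    apply hfin
    have := hmarkov t
    rw [h, ENNReal.mul_top (by simp [ht, ENNReal.ofReal_eq_zero, not_le])] at this
    exact top_le_iff.mp this
  have hanti : Antitone d := fun s t hst =>
    measure_mono (fun x hx => lt_of_le_of_lt hst hx)
  have hmeas_lt : ∀ t : ℝ, MeasurableSet {x | t < f x} := fun t =>
    measurableSet_lt measurable_const hf
  by_cases hcase : ∀ t : ℝ, 0 < t → d t ≤ K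
  · -- easy case: take A = support of f
    refine ⟨{x | 0 < f x}, measurableSet_lt measurable_const hf, ?_, ?_⟩
    · have hU : {x | 0 < f x} = ⋃ n : ℕ, {x | 1 / (n + 1 : ℝ) < f x} := by
        ext x
        simp only [mem_setOf_eq, mem_iUnion]
        constructor
        · intro hx
          obtain ⟨n, hn⟩ := exists_nat_one_div_lt hx
          exact ⟨n, hn⟩
        · rintro ⟨n, hn⟩
          exact lt_trans (by positivity) hn
      rw [hU]
      have hmonot : Monotone fun n : ℕ => {x | 1 / (n + 1 : ℝ) < f x} := by
        intro n m hnm x hx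
        simp only [mem_setOf_eq] at hx ⊢
        refine lt_of_le_of_lt ?_ hx
        apply one_div_le_one_div_of_le (by positivity)
        have : (n : ℝ) ≤ m := Nat.cast_le.mpr hnm
        linarith
      rw [hmonot.measure_iUnion]
      exact iSup_le fun n => hcase _ (by positivity)
    · have h0 : ∫⁻ t in Ioi (0:ℝ), min (d t) K ≤ ∫⁻ t in Ioi (0:ℝ), d t :=
        lintegral_mono fun t => min_le_left _ _
      have h1 : ∫⁻ t in Ioi (0:ℝ), d t = L :=
        (lintegral_eq_lintegral_meas_lt μ (Filter.Eventually.of_forall hf0) hf.aemeasurable).symm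
      have h2 : L = ∫⁻ x in {x | 0 < f x}, ENNReal.ofReal (f x) ∂μ := by
        rw [hL, ← lintegral_indicator (measurableSet_lt measurable_const hf)]
        congr 1
        funext x
        by_cases hx : 0 < f x
        · simp [Set.indicator, hx]
        · have hfx : f x = 0 := le_antisymm (not_lt.mp hx) (hf0 x)
          simp [Set.indicator, hx, hfx]
      exact h0.trans (h1.trans_le h2.le)
  · push_neg at hcase
    obtain ⟨t₁, ht₁pos, ht₁⟩ := hcase
    set T : Set ℝ := {t : ℝ | 0 < t ∧ K < d t} with hT
    have hTne : T.Nonempty := ⟨t₁, ht₁pos, ht₁⟩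
    have hTbdd : BddAbove T := by
      refine ⟨(L / K).toReal, fun t ht => ?_⟩
      have h1 : ENNReal.ofReal t * K ≤ L :=
        le_trans (by gcongr; exact ht.2.le) (hmarkov t)
      have h2 : ENNReal.ofReal t ≤ L / K :=
        ENNReal.le_div_iff_mul_le (Or.inl hK0) (Or.inr hfin) |>.mpr h1
      have h3 : L / K ≠ ∞ := (ENNReal.div_lt_top hfin hK0).ne
      calc t = (ENNReal.ofReal t).toReal := (ENNReal.toReal_ofReal ht.1.le).symm
      _ ≤ (L / K).toReal := ENNReal.toReal_mono h3 h2
    set t₀ : ℝ := sSup T with ht₀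
    have ht₀pos : 0 < t₀ := lt_of_lt_of_le ht₁pos (le_csSup hTbdd ⟨ht₁pos, ht₁⟩)
    have hgt : ∀ t : ℝ, t₀ < t → d t ≤ K := by
      intro t ht
      by_contra h
      exact absurd (le_csSup hTbdd ⟨lt_trans ht₀pos ht, not_le.mp h⟩) (not_le.mpr ht)
    have hlt : ∀ t : ℝ, t < t₀ → K ≤ d t := by
      intro t ht
      set s : ℝ := max t (t₀ / 2) with hs
      have hst₀ : s < t₀ := max_lt ht (half_lt_self ht₀pos)
      obtain ⟨s', hs'T, hss'⟩ := exists_lt_of_lt_csSup hTne hst₀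
      exact le_trans hs'T.2.le (hanti ((le_max_left _ _).trans hss'.le))
    set B : Set Ω := {x | t₀ < f x} with hB
    have hBm : MeasurableSet B := measurableSet_lt measurable_const hf
    have hμB : μ B ≤ K := by
      have hU : B = ⋃ n : ℕ, {x | t₀ + 1 / (n + 1 : ℝ) < f x} := by
        ext x
        simp only [hB, mem_setOf_eq, mem_iUnion]
        constructor
        · intro hx
          obtain ⟨n, hn⟩ := exists_nat_one_div_lt (sub_pos.mpr hx)
          exact ⟨n, by linarith⟩
        · rintro ⟨n, hn⟩
          have h1 : (0:ℝ) < 1/(n+1) := by positivity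
          linarith
      rw [hU]
      have hmonot : Monotone fun n : ℕ => {x | t₀ + 1 / (n + 1 : ℝ) < f x} := by
        intro n m hnm x hx
        simp only [mem_setOf_eq] at hx ⊢
        have h1 : (1:ℝ)/(m+1) ≤ 1/(n+1) := by
          apply one_div_le_one_div_of_le (by positivity)
          have : (n : ℝ) ≤ m := Nat.cast_le.mpr hnm
          linarith
        linarith
      rw [hmonot.measure_iUnion]
      refine iSup_le fun n => hgt _ ?_
      have h1 : (0:ℝ) < 1/(n+1) := by positivity
      linarith
    have hμBfin : μ B ≠ ∞ := fun h => hK (top_le_iff.mp (h ▸ hμB))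
    set E : Set Ω := {x | t₀ ≤ f x} with hE
    have hEm : MeasurableSet E := measurableSet_le measurable_const hf
    have hBE : B ⊆ E := fun x hx => show t₀ ≤ f x from le_of_lt hx
    have hEfin : μ E ≠ ∞ := by
      have hsub : E ⊆ {x | t₀ / 2 < f x} := fun x hx =>
        lt_of_lt_of_le (half_lt_self ht₀pos) hx
      exact ne_top_of_le_ne_top (hdfin _ (half_pos ht₀pos)) (measure_mono hsub)
    have hKE : K ≤ μ E := by
      have hI : E = ⋂ n : ℕ, {x | t₀ - 1 / (n + 1 : ℝ) < f x} := by
        ext x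
        simp only [hE, mem_setOf_eq, mem_iInter]
        constructor
        · intro hx n
          have h1 : (0:ℝ) < 1/(n+1) := by positivity
          linarith
        · intro h
          by_contra hx
          push_neg at hx
          obtain ⟨n, hn⟩ := exists_nat_one_div_lt (sub_pos.mpr hx)
          have := h n
          linarith
      obtain ⟨n₀, hn₀⟩ := exists_nat_one_div_lt ht₀pos
      rw [hI, Directed.measure_iInter (fun n => (hmeas_lt _).nullMeasurableSet) ?_ ?_]
      · refine le_iInf fun n => hlt _ ?_
        have h1 : (0:ℝ) < 1/(n+1) := by positivity
        linarith
      · intro n m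
        refine ⟨max n m, fun x hx => ?_, fun x hx => ?_⟩ <;>
          simp only [mem_setOf_eq] at hx ⊢
        · have h1 : (1:ℝ)/(max n m+1) ≤ 1/(n+1) := by
            apply one_div_le_one_div_of_le (by positivity)
            have : (n : ℝ) ≤ max n m := Nat.cast_le.mpr (le_max_left n m)
            linarith
          linarith
        · have h1 : (1:ℝ)/(max n m+1) ≤ 1/(m+1) := by
            apply one_div_le_one_div_of_le (by positivity)
            have : (m : ℝ) ≤ max n m := Nat.cast_le.mpr (le_max_right n m)
            linarith
          linarith
      · exact ⟨n₀, hdfin _ (by linarith)⟩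
    have hdiff : K - μ B ≤ μ (E \ B) := by
      rw [measure_diff hBE hBm.nullMeasurableSet hμBfin]
      exact tsub_le_tsub_right hKE _
    obtain ⟨S', hS'm, hS'sub, hS'meas⟩ := exists_subset_measure_eq_atomFree hμ (hEm.diff hBm)
      (ne_top_of_le_ne_top hEfin (measure_mono diff_subset)) hdiff
    have hdisj : Disjoint B S' := disjoint_sdiff_right.mono_right hS'sub
    have hμA : μ (B ∪ S') = K := by
      rw [measure_union hdisj hS'm, hS'meas, add_tsub_cancel_of_le hμB]
    refine ⟨B ∪ S', hBm.union hS'm, hμA.le, ?_⟩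
    have hsplit : ∫⁻ x in B ∪ S', ENNReal.ofReal (f x) ∂μ =
        (∫⁻ x in B, ENNReal.ofReal (f x) ∂μ) + ∫⁻ x in S', ENNReal.ofReal (f x) ∂μ :=
      lintegral_union hS'm hdisj
    have hS'lb : ENNReal.ofReal t₀ * μ S' ≤ ∫⁻ x in S', ENNReal.ofReal (f x) ∂μ := by
      have hb : ∀ x ∈ S', ENNReal.ofReal t₀ ≤ ENNReal.ofReal (f x) := fun x hx =>
        ENNReal.ofReal_le_ofReal (hS'sub hx).1
      calc ENNReal.ofReal t₀ * μ S' = ∫⁻ _ in S', ENNReal.ofReal t₀ ∂μ :=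
            (setLIntegral_const _ _).symm
      _ ≤ _ := setLIntegral_mono hofReal_meas hb
    have hBlayer : ∫⁻ x in B, ENNReal.ofReal (f x) ∂μ =
        ∫⁻ t in Ioi (0:ℝ), μ ({x | t < f x} ∩ B) := by
      rw [lintegral_eq_lintegral_meas_lt (μ.restrict B) (Filter.Eventually.of_forall hf0)
        hf.aemeasurable]
      exact lintegral_congr fun t => by rw [Measure.restrict_apply (hmeas_lt t)]
    have hIoi : Ioi (0:ℝ) = Ioc 0 t₀ ∪ Ioi t₀ := (Ioc_union_Ioi_eq_Ioi ht₀pos.le).symm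
    have hBcomp : ∫⁻ t in Ioi (0:ℝ), μ ({x | t < f x} ∩ B) =
        μ B * ENNReal.ofReal t₀ + ∫⁻ t in Ioi t₀, d t := by
      rw [hIoi, lintegral_union measurableSet_Ioi (Ioc_disjoint_Ioi le_rfl)]
      congr 1
      · have hc : ∀ t ∈ Ioc (0:ℝ) t₀, μ ({x | t < f x} ∩ B) = μ B := by
          intro t ht
          have hsub : B ⊆ {x | t < f x} := fun x hx =>
            show t < f x from lt_of_le_of_lt ht.2 hx
          rw [inter_eq_self_of_subset_right hsub]
        rw [setLIntegral_congr_fun measurableSet_Ioc hc,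
          setLIntegral_const, Real.volume_Ioc, sub_zero]
      · refine setLIntegral_congr_fun measurableSet_Ioi ?_
        intro t ht
        have hsub : {x | t < f x} ⊆ B := fun x hx =>
          show t₀ < f x from lt_trans ht hx
        exact congrArg μ (inter_eq_self_of_subset_left hsub)
    have hmain : ∫⁻ t in Ioi (0:ℝ), min (d t) K ≤
        ENNReal.ofReal t₀ * K + ∫⁻ t in Ioi t₀, d t := by
      rw [hIoi, lintegral_union measurableSet_Ioi (Ioc_disjoint_Ioi le_rfl)]
      refine add_le_add ?_ (lintegral_mono fun t => min_le_left _ _)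
      calc ∫⁻ t in Ioc (0:ℝ) t₀, min (d t) K ≤ ∫⁻ _ in Ioc (0:ℝ) t₀, K :=
          lintegral_mono fun t => min_le_right _ _
      _ = K * ENNReal.ofReal t₀ := by rw [setLIntegral_const, Real.volume_Ioc, sub_zero]
      _ = ENNReal.ofReal t₀ * K := mul_comm _ _
    calc ∫⁻ t in Ioi (0:ℝ), min (d t) K
        ≤ ENNReal.ofReal t₀ * K + ∫⁻ t in Ioi t₀, d t := hmain
    _ = μ B * ENNReal.ofReal t₀ + ENNReal.ofReal t₀ * (K - μ B) + ∫⁻ t in Ioi t₀, d t := by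
        have he : ENNReal.ofReal t₀ * K =
            μ B * ENNReal.ofReal t₀ + ENNReal.ofReal t₀ * (K - μ B) := by
          rw [mul_comm (μ B), ← mul_add, add_tsub_cancel_of_le hμB]
        rw [he]
    _ = (μ B * ENNReal.ofReal t₀ + ∫⁻ t in Ioi t₀, d t) + ENNReal.ofReal t₀ * μ S' := by
        rw [hS'meas]; ring
    _ ≤ (∫⁻ x in B, ENNReal.ofReal (f x) ∂μ) + ∫⁻ x in S', ENNReal.ofReal (f x) ∂μ := by
        rw [hBlayer, hBcomp]
        exact add_le_add le_rfl hS'lb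
    _ = ∫⁻ x in B ∪ S', ENNReal.ofReal (f x) ∂μ := hsplit.symm

/-- generalized Hölder inequality: for atom-free σ-finite `μ`, `u ∈ L¹`,
`v ∈ L¹ ∩ L^∞` and `K ∈ (0, μ(Ω))`:
`∫ u·v dμ ≤ |u|_K · max(‖v‖_∞, K⁻¹‖v‖₁)`. -/
theorem stmt10 {Ω : Type*} [MeasurableSpace Ω] (μ : Measure Ω) [SigmaFinite μ]
    (hμ : AtomFree μ) (u v : Ω → ℝ) (hu : Integrable u μ)
    (hv1 : Integrable v μ) (hvinf : MemLp v ∞ μ)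
    (K : ℝ≥0∞) (hK0 : 0 < K) (hK : K < μ Set.univ) :
    ∫ x, u x * v x ∂μ ≤
      largestK μ K u * max (eLpNorm v ∞ μ).toReal ((∫ x, |v x| ∂μ) / K.toReal) := by
  have hKne : K ≠ 0 := hK0.ne'
  have hKtop : K ≠ ∞ := (hK.trans_le le_top).ne
  -- measurable representatives
  set u' : Ω → ℝ := hu.1.mk u with hu'def
  have hu'm : StronglyMeasurable u' := hu.1.stronglyMeasurable_mk
  have hueq : u =ᵐ[μ] u' := hu.1.ae_eq_mk
  set v' : Ω → ℝ := hv1.1.mk v with hv'def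
  have hv'm : StronglyMeasurable v' := hv1.1.stronglyMeasurable_mk
  have hveq : v =ᵐ[μ] v' := hv1.1.ae_eq_mk
  set f : Ω → ℝ := fun x => |u' x| with hfdef
  have hfm : Measurable f := hu'm.measurable.abs
  have hf0 : ∀ x, 0 ≤ f x := fun x => abs_nonneg _
  have hfofReal : ∀ x, ENNReal.ofReal (f x) = (‖u' x‖₊ : ℝ≥0∞) := fun x =>
    (Real.enorm_eq_ofReal_abs (u' x)).symm
  have hfin : ∫⁻ x, ENNReal.ofReal (f x) ∂μ ≠ ∞ := by
    simp_rw [hfofReal]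
    exact ((hu.congr hueq).2).ne
  -- the ENNReal max constant
  set L1 : ℝ≥0∞ := ∫⁻ x, (‖v x‖₊ : ℝ≥0∞) ∂μ with hL1def
  have hL1fin : L1 ≠ ∞ := hv1.2.ne
  set M : ℝ≥0∞ := max (eLpNorm v ∞ μ) (L1 / K) with hMdef
  have hMtop : M ≠ ∞ :=
    (max_lt hvinf.2 (ENNReal.div_lt_top hL1fin hKne)).ne
  -- integrability of the product
  have hvbd : ∀ᵐ x ∂μ, ‖v x‖ ≤ (eLpNorm v ∞ μ).toReal := by
    filter_upwards [ae_le_eLpNormEssSup (f := v) (μ := μ)] with x hx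
    have h1 : ((‖v x‖₊ : ℝ≥0∞)).toReal ≤ (eLpNormEssSup v μ).toReal :=
      ENNReal.toReal_mono (by rw [← eLpNorm_exponent_top]; exact hvinf.2.ne) hx
    simpa [eLpNorm_exponent_top, coe_nnnorm] using h1
  have huv : Integrable (fun x => u x * v x) μ := by
    have h1 : Integrable (fun x => v x * u x) μ := hu.bdd_mul hv1.1 hvbd
    exact h1.congr (Filter.Eventually.of_forall fun x => mul_comm _ _)
  -- step 1 : pass to |u| * |v|
  have habs : Integrable (fun x => |u x| * |v x|) μ := by
    refine (huv.abs).congr (Filter.Eventually.of_forall fun x => ?_)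
    simp [abs_mul]
  have step1 : ∫ x, u x * v x ∂μ ≤ ∫ x, |u x| * |v x| ∂μ := by
    refine integral_mono huv habs fun x => ?_
    calc u x * v x ≤ |u x * v x| := le_abs_self _
    _ = |u x| * |v x| := abs_mul _ _
  -- step 2 : to lintegral
  set I : ℝ≥0∞ := ∫⁻ x, ENNReal.ofReal (|u x| * |v x|) ∂μ with hIdef
  have step2 : ∫ x, |u x| * |v x| ∂μ = I.toReal := by
    rw [hIdef, integral_eq_lintegral_of_nonneg_ae
      (Filter.Eventually.of_forall fun x => mul_nonneg (abs_nonneg _) (abs_nonneg _))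
      habs.1]
  -- rewrite I via measurable representatives and withDensity
  set g : Ω → ℝ≥0∞ := fun x => ENNReal.ofReal (|v' x|) with hgdef
  have hgm : Measurable g := ENNReal.measurable_ofReal.comp hv'm.measurable.abs
  have hIeq : I = ∫⁻ x, ENNReal.ofReal (f x) ∂(μ.withDensity g) := by
    rw [lintegral_withDensity_eq_lintegral_mul μ hgm hfm.ennreal_ofReal]
    refine lintegral_congr_ae ?_
    filter_upwards [hueq, hveq] with x hxu hxv
    simp only [Pi.mul_apply, hgdef, hfdef]
    rw [ENNReal.ofReal_mul (abs_nonneg _), hxu, hxv, mul_comm]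
  -- layer cake for the measure with density
  set ν : Measure Ω := μ.withDensity g with hνdef
  have hlayer : ∫⁻ x, ENNReal.ofReal (f x) ∂ν =
      ∫⁻ t in Ioi (0:ℝ), ν {x | t < f x} := by
    exact lintegral_eq_lintegral_meas_lt ν (Filter.Eventually.of_forall hf0)
      hfm.aemeasurable
  -- bound ν A ≤ M * min (μ A) K for measurable A
  have hgbd : ∀ᵐ x ∂μ, g x ≤ eLpNorm v ∞ μ := by
    filter_upwards [ae_le_eLpNormEssSup (f := v) (μ := μ), hveq] with x hx hxv
    rw [eLpNorm_exponent_top]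
    calc g x = (‖v' x‖₊ : ℝ≥0∞) := (Real.enorm_eq_ofReal_abs (v' x)).symm
    _ = (‖v x‖₊ : ℝ≥0∞) := by rw [hxv]
    _ ≤ eLpNormEssSup v μ := hx
  have hgL1 : ∫⁻ x, g x ∂μ = L1 := by
    refine lintegral_congr_ae ?_
    filter_upwards [hveq] with x hxv
    show ENNReal.ofReal |v' x| = (‖v x‖₊ : ℝ≥0∞)
    rw [← hxv]
    exact (Real.enorm_eq_ofReal_abs (v x)).symm
  have hνbound : ∀ A : Set Ω, MeasurableSet A → ν A ≤ M * min (μ A) K := by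
    intro A hAm
    rw [hνdef, withDensity_apply g hAm]
    rcases le_total (μ A) K with h | h
    · rw [min_eq_left h]
      calc ∫⁻ x in A, g x ∂μ ≤ ∫⁻ _ in A, eLpNorm v ∞ μ ∂μ :=
            lintegral_mono_ae (ae_restrict_of_ae hgbd)
      _ = eLpNorm v ∞ μ * μ A := setLIntegral_const _ _
      _ ≤ M * μ A := by gcongr; exact le_max_left _ _
    · rw [min_eq_right h]
      calc ∫⁻ x in A, g x ∂μ ≤ ∫⁻ x, g x ∂μ := setLIntegral_le_lintegral _ _
      _ = L1 := hgL1
      _ = L1 / K * K := (ENNReal.div_mul_cancel hKne hKtop).symm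
      _ ≤ M * K := by gcongr; exact le_max_right _ _
  -- apply the key lemma
  obtain ⟨A, hAm, hAK, hAkey⟩ := key_minlayer hμ hfm hf0 hfin hKne hKtop
  -- largestK facts
  have hbdd : BddAbove {r : ℝ | ∃ A : Set Ω, MeasurableSet A ∧ μ A ≤ K ∧
      r = ∫ x in A, |u x| ∂μ} := by
    refine ⟨∫ x, |u x| ∂μ, ?_⟩
    rintro r ⟨A', hA'm, hA'K, rfl⟩
    exact setIntegral_le_integral hu.abs (Filter.Eventually.of_forall fun x => abs_nonneg _)
  have hlK_mem : (∫ x in A, |u x| ∂μ) ≤ largestK μ K u :=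
    le_csSup hbdd ⟨A, hAm, hAK, rfl⟩
  have hlK0 : 0 ≤ largestK μ K u := by
    refine le_csSup hbdd ⟨∅, MeasurableSet.empty, by simp, by simp⟩
  -- assemble the ENNReal chain
  have hchain : I ≤ M * ENNReal.ofReal (largestK μ K u) := by
    calc I = ∫⁻ t in Ioi (0:ℝ), ν {x | t < f x} := by rw [hIeq, hlayer]
    _ ≤ ∫⁻ t in Ioi (0:ℝ), M * min (μ {x | t < f x}) K :=
        lintegral_mono fun t => hνbound _ (measurableSet_lt measurable_const hfm)
    _ = M * ∫⁻ t in Ioi (0:ℝ), min (μ {x | t < f x}) K := lintegral_const_mul' _ _ hMtop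
    _ ≤ M * ∫⁻ x in A, ENNReal.ofReal (f x) ∂μ := by gcongr
    _ = M * ∫⁻ x in A, ENNReal.ofReal (|u x|) ∂μ := by
        congr 1
        refine lintegral_congr_ae ?_
        filter_upwards [ae_restrict_of_ae hueq] with x hx
        rw [hfdef]
        simp only
        rw [hx]
    _ = M * ENNReal.ofReal (∫ x in A, |u x| ∂μ) := by
        congr 1
        rw [ofReal_integral_eq_lintegral_ofReal (hu.abs.restrict)
          (Filter.Eventually.of_forall fun x => abs_nonneg _)]
    _ ≤ M * ENNReal.ofReal (largestK μ K u) :=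
        mul_le_mul_right (ENNReal.ofReal_le_ofReal hlK_mem) M
  -- back to real numbers
  have hfinal : I.toReal ≤ M.toReal * largestK μ K u := by
    have h1 : (M * ENNReal.ofReal (largestK μ K u)).toReal =
        M.toReal * largestK μ K u := by
      rw [ENNReal.toReal_mul, ENNReal.toReal_ofReal hlK0]
    rw [← h1]
    exact ENNReal.toReal_mono (ENNReal.mul_ne_top hMtop ENNReal.ofReal_ne_top) hchain
  have hMtoReal : M.toReal = max (eLpNorm v ∞ μ).toReal ((∫ x, |v x| ∂μ) / K.toReal) := by
    have hL1toReal : L1.toReal = ∫ x, |v x| ∂μ := by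
      rw [hL1def]
      change (∫⁻ x, ‖v x‖ₑ ∂μ).toReal = _
      rw [← integral_norm_eq_lintegral_enorm hv1.1]
      simp [Real.norm_eq_abs]
    rw [hMdef, ENNReal.toReal_max hvinf.2.ne (ENNReal.div_lt_top hL1fin hKne).ne,
      ENNReal.toReal_div, hL1toReal]
  calc ∫ x, u x * v x ∂μ ≤ ∫ x, |u x| * |v x| ∂μ := step1
  _ = I.toReal := step2
  _ ≤ M.toReal * largestK μ K u := hfinal
  _ = largestK μ K u * max (eLpNorm v ∞ μ).toReal ((∫ x, |v x| ∂μ) / K.toReal) := by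
      rw [hMtoReal, mul_comm]
end
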